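/- Let x_{i−1} < x_i < x_{i+1}, h_{i−1} = x_i − x_{i−1}, h_i = x_{i+1} − x_i, and let m_{i−1}, m_i be the divided differences of given data. Define the Fritsch–Butland value ḟ_i^{FB} by: ḟ_i^{FB} = 3·m_{i−1}·m_i/(m_{i−1} + 2·m_i) if m_{i−1}·m_i > 0 and |m_i| ≤ |m_{i−1}|; ḟ_i^{FB} = 3·m_{i−1}·m_i/(m_i + 2·m_{i−1}) if m_{i−1}·m_i > 0 and |m_i| > |m_{i−1}|; and ḟ_i^{FB} = 0 if m_{i−1}·m_i ≤ 0. Then: (a) ḟ_i^{FB}·m_{i−1} ≥ 0, ḟ_i^{FB}·m_i ≥ 0, and |ḟ_i^{FB}| ≤ 3·min(|m_{i−1}|, |m_i|); (b) if f is twice continuously differentiable on [x_{i−1}, x_{i+1}] with |f''(x)| ≤ M there, m_{i−1} = (f(x_i) − f(x_{i−1}))/h_{i−1}, m_i = (f(x_{i+1}) − f(x_i))/h_i, and m_{i−1}·m_i > 0, then |ḟ_i^{FB} − f'(x_i)| ≤ (3/2)·M·max(h_{i−1}, h_i), i.e. ḟ_i^{FB} is a first-order accurate approximation of f'(x_i).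 -/

import Mathlib

/-- The Fritsch–Butland derivative value built from the two adjacent divided
differences `mm = mᵢ₋₁`, `mi = mᵢ`. -/
noncomputable def fritschButland (mm mi : ℝ) : ℝ :=
  if mm * mi ≤ 0 then 0
  else if |mi| ≤ |mm| then 3 * mm * mi / (mm + 2 * mi)
  else 3 * mm * mi / (mi + 2 * mm)

lemma fb_neg (mm mi : ℝ) : fritschButland (-mm) (-mi) = - fritschButland mm mi := by
  unfold fritschButland
  simp only [neg_mul_neg, abs_neg]
  split_ifs with h1 h2
  · simp
  · rw [show (-mm + 2 * -mi) = -(mm + 2 * mi) by ring, div_neg]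
    ring_nf
  · rw [show (-mi + 2 * -mm) = -(mi + 2 * mm) by ring, div_neg]
    ring_nf

lemma fb_pos (mm mi : ℝ) (hmm : 0 < mm) (hmi : 0 < mi) :
    min mm mi ≤ fritschButland mm mi ∧ fritschButland mm mi ≤ max mm mi ∧
      fritschButland mm mi ≤ 3 * min mm mi := by
  unfold fritschButland
  rw [if_neg (by push_neg; positivity)]
  rw [abs_of_pos hmi, abs_of_pos hmm]
  rcases le_or_gt mi mm with h | h
  · rw [if_pos h, min_eq_right h, max_eq_left h]
    have hd : 0 < mm + 2 * mi := by linarith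
    refine ⟨?_, ?_, ?_⟩
    · rw [le_div_iff₀ hd]; nlinarith
    · rw [div_le_iff₀ hd]; nlinarith
    · rw [div_le_iff₀ hd]; nlinarith
  · rw [if_neg (by linarith), min_eq_left h.le, max_eq_right h.le]
    have hd : 0 < mi + 2 * mm := by linarith
    refine ⟨?_, ?_, ?_⟩
    · rw [le_div_iff₀ hd]; nlinarith
    · rw [div_le_iff₀ hd]; nlinarith
    · rw [div_le_iff₀ hd]; nlinarith

lemma fb_between (mm mi : ℝ) (h : 0 < mm * mi) :
    min mm mi ≤ fritschButland mm mi ∧ fritschButland mm mi ≤ max mm mi := by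
  rcases lt_or_ge 0 mm with hmm | hmm
  · have hmi : 0 < mi := by nlinarith
    exact ⟨(fb_pos mm mi hmm hmi).1, (fb_pos mm mi hmm hmi).2.1⟩
  · have hmm' : mm < 0 := lt_of_le_of_ne hmm (by rintro rfl; simp at h)
    have hmi : mi < 0 := by nlinarith
    obtain ⟨h1, h2, _⟩ := fb_pos (-mm) (-mi) (by linarith) (by linarith)
    rw [fb_neg] at h1 h2
    constructor
    · have : fritschButland mm mi ≥ -(max (-mm) (-mi)) := by linarith
      rwa [max_neg_neg, neg_neg] at this
    · have : fritschButland mm mi ≤ -(min (-mm) (-mi)) := by linarith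
      rwa [min_neg_neg, neg_neg] at this

lemma fb_a (mm mi : ℝ) :
    0 ≤ fritschButland mm mi * mm ∧ 0 ≤ fritschButland mm mi * mi ∧
      |fritschButland mm mi| ≤ 3 * min |mm| |mi| := by
  rcases le_or_gt (mm * mi) 0 with h | h
  · rw [fritschButland, if_pos h]
    refine ⟨by simp, by simp, by rw [abs_zero]; positivity⟩
  rcases lt_or_ge 0 mm with hmm | hmm
  · have hmi : 0 < mi := by nlinarith
    obtain ⟨h1, _, h3⟩ := fb_pos mm mi hmm hmi
    have hFpos : 0 < fritschButland mm mi := lt_of_lt_of_le (lt_min hmm hmi) h1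
    refine ⟨by positivity, by positivity, ?_⟩
    rw [abs_of_pos hFpos, abs_of_pos hmm, abs_of_pos hmi]
    exact h3
  · have hmm' : mm < 0 := lt_of_le_of_ne hmm (by rintro rfl; simp at h)
    have hmi : mi < 0 := by nlinarith
    obtain ⟨h1, _, h3⟩ := fb_pos (-mm) (-mi) (by linarith) (by linarith)
    rw [fb_neg] at h1 h3
    have hFneg : fritschButland mm mi < 0 := by
      have : 0 < min (-mm) (-mi) := lt_min (by linarith) (by linarith)
      linarith
    refine ⟨by nlinarith, by nlinarith, ?_⟩
    rw [abs_of_neg hFneg, abs_of_neg hmm', abs_of_neg hmi]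
    exact h3

/-- (a) The Fritsch–Butland value has the same sign as both adjacent divided
differences and satisfies `|ḟᵢ^{FB}| ≤ 3·min(|mᵢ₋₁|, |mᵢ|)`;
(b) for `f ∈ C²` with `|f''| ≤ M` and `mᵢ₋₁·mᵢ > 0` it is a first-order
accurate approximation of `f'(xᵢ)`:
`|ḟᵢ^{FB} − f'(xᵢ)| ≤ (3/2)·M·max(hᵢ₋₁, hᵢ)`. -/
theorem fritschButland_properties :
    (∀ mm mi : ℝ,
      0 ≤ fritschButland mm mi * mm ∧ 0 ≤ fritschButland mm mi * mi ∧
      |fritschButland mm mi| ≤ 3 * min |mm| |mi|) ∧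
    (∀ (xm xi xp M : ℝ) (f : ℝ → ℝ), xm < xi → xi < xp →
      ContDiffOn ℝ 2 f (Set.Icc xm xp) →
      (∀ t ∈ Set.Icc xm xp, |iteratedDerivWithin 2 f (Set.Icc xm xp) t| ≤ M) →
      ((f xi - f xm) / (xi - xm)) * ((f xp - f xi) / (xp - xi)) > 0 →
      |fritschButland ((f xi - f xm) / (xi - xm)) ((f xp - f xi) / (xp - xi))
          - deriv f xi|
        ≤ 3 / 2 * M * max (xi - xm) (xp - xi)) := by
  refine ⟨fun mm mi => fb_a mm mi, ?_⟩
  intro xm xi xp M f hxm hxp hcd hM hprod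
  set s := Set.Icc xm xp with hs
  have hxmp : xm < xp := hxm.trans hxp
  have hsU : UniqueDiffOn ℝ s := uniqueDiffOn_Icc hxmp
  set mm := (f xi - f xm) / (xi - xm) with hmm
  set mi := (f xp - f xi) / (xp - xi) with hmi
  set g := derivWithin f s with hg
  have hgd : ContDiffOn ℝ 1 g s := hcd.derivWithin hsU (by norm_num)
  have hgdiff : DifferentiableOn ℝ g s := hgd.differentiableOn (by norm_num)
  have hM0 : 0 ≤ M := le_trans (abs_nonneg _) (hM xi ⟨hxm.le, hxp.le⟩)
  have hgM : ∀ x ∈ s, ‖derivWithin g s x‖ ≤ M := by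
    intro x hx
    have h1 : Set.EqOn (iteratedDerivWithin 1 f s) g s := fun y hy =>
      congrFun iteratedDerivWithin_one y
    have h2 : iteratedDerivWithin 2 f s x = derivWithin g s x := by
      rw [show (2:ℕ) = 1+1 from rfl, iteratedDerivWithin_succ]
      exact derivWithin_congr h1 (h1 hx)
    rw [Real.norm_eq_abs, ← h2]
    exact hM x hx
  have hlip : ∀ x ∈ s, ∀ y ∈ s, ‖g y - g x‖ ≤ M * ‖y - x‖ := fun x hx y hy =>
    (convex_Icc xm xp).norm_image_sub_le_of_norm_derivWithin_le hgdiff hgM hx hy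
  have hdiff : ∀ y ∈ Set.Ioo xm xp, HasDerivAt f (deriv f y) y := by
    intro y hy
    have hmem : s ∈ nhds y := Icc_mem_nhds hy.1 hy.2
    exact (((hcd.differentiableOn (by norm_num)) y (Set.Ioo_subset_Icc_self hy)).differentiableAt
      hmem).hasDerivAt
  have hgint : ∀ y, xm < y → y < xp → g y = deriv f y := fun y h1 h2 =>
    derivWithin_of_mem_nhds (Icc_mem_nhds h1 h2)
  obtain ⟨c, hcmem, hceq⟩ := exists_hasDerivAt_eq_slope f (deriv f) hxm
    (hcd.continuousOn.mono (Set.Icc_subset_Icc le_rfl hxp.le))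
    (fun y hy => hdiff y ⟨hy.1, hy.2.trans hxp⟩)
  obtain ⟨d, hdmem, hdeq⟩ := exists_hasDerivAt_eq_slope f (deriv f) hxp
    (hcd.continuousOn.mono (Set.Icc_subset_Icc hxm.le le_rfl))
    (fun y hy => hdiff y ⟨hxm.trans hy.1, hy.2⟩)
  have hcs : c ∈ s := ⟨hcmem.1.le, (hcmem.2.trans hxp).le⟩
  have hds : d ∈ s := ⟨(hxm.trans hdmem.1).le, hdmem.2.le⟩
  have hxis : xi ∈ s := ⟨hxm.le, hxp.le⟩
  have b1 : |mm - deriv f xi| ≤ M * (xi - xm) := by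
    rw [hmm, ← hceq, ← hgint c hcmem.1 (hcmem.2.trans hxp), ← hgint xi hxm hxp]
    calc |g c - g xi| ≤ M * |c - xi| := by
            have := hlip xi hxis c hcs
            simpa [Real.norm_eq_abs] using this
      _ ≤ M * (xi - xm) := by
            apply mul_le_mul_of_nonneg_left _ hM0
            rw [abs_of_nonpos (by linarith [hcmem.2])]
            linarith [hcmem.1]
  have b2 : |mi - deriv f xi| ≤ M * (xp - xi) := by
    rw [hmi, ← hdeq, ← hgint d (hxm.trans hdmem.1) hdmem.2, ← hgint xi hxm hxp]
    calc |g d - g xi| ≤ M * |d - xi| := by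
            have := hlip xi hxis d hds
            simpa [Real.norm_eq_abs] using this
      _ ≤ M * (xp - xi) := by
            apply mul_le_mul_of_nonneg_left _ hM0
            rw [abs_of_nonneg (by linarith [hdmem.1])]
            linarith [hdmem.2]
  obtain ⟨hlo, hhi⟩ := fb_between mm mi hprod
  have hle1 : M * (xi - xm) ≤ M * max (xi - xm) (xp - xi) :=
    mul_le_mul_of_nonneg_left (le_max_left _ _) hM0
  have hle2 : M * (xp - xi) ≤ M * max (xi - xm) (xp - xi) :=
    mul_le_mul_of_nonneg_left (le_max_right _ _) hM0
  have hmax0 : 0 ≤ M * max (xi - xm) (xp - xi) :=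
    mul_nonneg hM0 (le_trans (by linarith) (le_max_left _ _))
  rw [abs_le] at b1 b2 ⊢
  rcases le_total mm mi with hcase | hcase
  · rw [min_eq_left hcase] at hlo
    rw [max_eq_right hcase] at hhi
    exact ⟨by linarith [b1.1, b2.1], by linarith [b1.2, b2.2]⟩
  · rw [min_eq_right hcase] at hlo
    rw [max_eq_left hcase] at hhi
    exact ⟨by linarith [b1.1, b2.1], by linarith [b1.2, b2.2]⟩
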